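/- arXiv:0903.3072 — 5 statements merged into one kernel-verified Lean document; each statement's English description precedes it below -/
import Mathlib

section
/- If a data point p1 ∈ P is spatially dominated by some point of P, then among all points of P that spatially dominate p1, the point p2 minimizing the sum of distances to all query points is a spatial skyline point (assuming the minimizer is unique). -/
def SpatiallyDominates {d : ℕ} (Q : Finset (EuclideanSpace ℝ (Fin d)))
    (a b : EuclideanSpace ℝ (Fin d)) : Prop :=
  (∀ q ∈ Q, dist a q ≤ dist b q) ∧ ∃ q ∈ Q, dist a q < dist b q

def IsSpatialSkyline {d : ℕ} (P Q : Finset (EuclideanSpace ℝ (Fin d)))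
    (p : EuclideanSpace ℝ (Fin d)) : Prop :=
  p ∈ P ∧ ∀ p' ∈ P, p' ≠ p → ¬ SpatiallyDominates Q p' p

theorem stmt5 (d : ℕ) (P Q : Finset (EuclideanSpace ℝ (Fin d))) (hQ : Q.Nonempty)
    (p1 p2 : EuclideanSpace ℝ (Fin d)) (hp1 : p1 ∈ P) (hp2 : p2 ∈ P)
    (hdom : SpatiallyDominates Q p2 p1)
    (hmin : ∀ p ∈ P, SpatiallyDominates Q p p1 → p ≠ p2 →
      ∑ q ∈ Q, dist p2 q < ∑ q ∈ Q, dist p q) :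
    IsSpatialSkyline P Q p2 := by
  refine ⟨hp2, fun p' hp' hne hdom' => ?_⟩
  obtain ⟨hle', ⟨q0, hq0, hlt'⟩⟩ := hdom'
  obtain ⟨hle, _⟩ := hdom
  have hdomp1 : SpatiallyDominates Q p' p1 :=
    ⟨fun q hq => (hle' q hq).trans (hle q hq), ⟨q0, hq0, lt_of_lt_of_le hlt' (hle q0 hq0)⟩⟩
  have h1 := hmin p' hp' hdomp1 hne
  have h2 : ∑ q ∈ Q, dist p' q ≤ ∑ q ∈ Q, dist p2 q :=
    Finset.sum_le_sum hle'
  linarith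
end

section
/- A point p ∈ P is spatially dominated by p' ∈ P with respect to Q if and only if p is spatially dominated by p' with respect to the set of extreme points (vertices) of the convex hull of Q, provided every point of Q lies in the convex hull of the extreme points. -/
open RealInnerProductSpace

def SpatiallyDominatesSet {d : ℕ} (R : Set (EuclideanSpace ℝ (Fin d)))
    (a b : EuclideanSpace ℝ (Fin d)) : Prop :=
  (∀ q ∈ R, dist a q ≤ dist b q) ∧ ∃ q ∈ R, dist a q < dist b q

lemma dist_le_iff_inner {d : ℕ} (a b x : EuclideanSpace ℝ (Fin d)) :
    dist a x ≤ dist b x ↔ 2 * ⟪b - a, x⟫ ≤ ‖b‖ ^ 2 - ‖a‖ ^ 2 := by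
  rw [dist_eq_norm, dist_eq_norm,
    ← pow_le_pow_iff_left₀ (norm_nonneg _) (norm_nonneg _) (two_ne_zero),
    norm_sub_sq_real, norm_sub_sq_real, inner_sub_left]
  ring_nf
  constructor <;> intro h <;> nlinarith

lemma halfspace_convex {d : ℕ} (a b : EuclideanSpace ℝ (Fin d)) :
    Convex ℝ {x | dist a x ≤ dist b x} := by
  have : {x : EuclideanSpace ℝ (Fin d) | dist a x ≤ dist b x}
      = {x | 2 * ⟪b - a, x⟫ ≤ ‖b‖ ^ 2 - ‖a‖ ^ 2} := by
    ext x; exact dist_le_iff_inner a b x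
  rw [this]
  exact convex_halfSpace_le
    ⟨fun u v => by simp [inner_add_right]; ring,
     fun c u => by simp [inner_smul_right]; ring⟩ _

lemma hyperplane_convex {d : ℕ} (a b : EuclideanSpace ℝ (Fin d)) :
    Convex ℝ {x | dist a x = dist b x} := by
  have : {x : EuclideanSpace ℝ (Fin d) | dist a x = dist b x}
      = {x | dist a x ≤ dist b x} ∩ {x | dist b x ≤ dist a x} := by
    ext x; simp [le_antisymm_iff]
  rw [this]
  exact (halfspace_convex a b).inter (halfspace_convex b a)

theorem stmt8 (d : ℕ) (P Q : Finset (EuclideanSpace ℝ (Fin d)))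
    (p p' : EuclideanSpace ℝ (Fin d)) (hp : p ∈ P) (hp' : p' ∈ P)
    (V : Set (EuclideanSpace ℝ (Fin d)))
    (hV : V = {q | q ∈ (Q : Set (EuclideanSpace ℝ (Fin d))) ∧
      q ∉ convexHull ℝ ((Q : Set (EuclideanSpace ℝ (Fin d))) \ {q})})
    (hQV : (Q : Set (EuclideanSpace ℝ (Fin d))) ⊆ convexHull ℝ V) :
    SpatiallyDominatesSet (Q : Set (EuclideanSpace ℝ (Fin d))) p' p ↔
      SpatiallyDominatesSet V p' p := by
  have hVQ : V ⊆ (Q : Set (EuclideanSpace ℝ (Fin d))) := by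
    rw [hV]; exact fun q hq => hq.1
  constructor
  · rintro ⟨hle, q, hq, hlt⟩
    refine ⟨fun v hv => hle v (hVQ hv), ?_⟩
    by_contra h
    push_neg at h
    have heq : ∀ v ∈ V, dist p' v = dist p v :=
      fun v hv => le_antisymm (hle v (hVQ hv)) (h v hv)
    have : convexHull ℝ V ⊆ {x | dist p' x = dist p x} :=
      convexHull_min heq (hyperplane_convex p' p)
    exact absurd (this (hQV hq)) (ne_of_lt hlt)
  · rintro ⟨hle, v, hv, hlt⟩
    refine ⟨fun q hq => ?_, v, hVQ hv, hlt⟩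
    have : convexHull ℝ V ⊆ {x | dist p' x ≤ dist p x} :=
      convexHull_min hle (halfspace_convex p' p)
    exact this (hQV hq)
end

section
/- If the Voronoi cell of a data point p ∈ P contains a point of the convex hull of Q in its interior region (i.e., some x ∈ conv(Q) satisfies d(x,p) < d(x,p') for all p' ∈ P with p' ≠ p), then p is a spatial skyline point with respect to Q. -/
lemma convex_bisector_le {d : ℕ} (a b : EuclideanSpace ℝ (Fin d)) :
    Convex ℝ {x : EuclideanSpace ℝ (Fin d) | dist x a ≤ dist x b} := by
  have : {x : EuclideanSpace ℝ (Fin d) | dist x a ≤ dist x b} =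
      {x : EuclideanSpace ℝ (Fin d) |
        inner ℝ ((2:ℝ) • (b - a) : EuclideanSpace ℝ (Fin d)) x ≤ ‖b‖ ^ 2 - ‖a‖ ^ 2} := by
    ext x
    simp only [Set.mem_setOf_eq, dist_eq_norm]
    rw [← Real.sqrt_sq (norm_nonneg (x - a)), ← Real.sqrt_sq (norm_nonneg (x - b)),
      Real.sqrt_le_sqrt_iff (by positivity)]
    rw [← real_inner_self_eq_norm_sq, ← real_inner_self_eq_norm_sq]
    simp only [inner_sub_left, inner_sub_right, real_inner_smul_left,
      real_inner_comm a x, real_inner_comm b x]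
    constructor <;> intro h <;> nlinarith [real_inner_self_eq_norm_sq a,
      real_inner_self_eq_norm_sq b]
  rw [this]
  exact convex_halfSpace_le ⟨fun y z => inner_add_right _ _ _,
    fun c y => real_inner_smul_right _ _ _⟩ _

theorem stmt9 (d : ℕ) (P Q : Finset (EuclideanSpace ℝ (Fin d))) (hQ : Q.Nonempty)
    (p : EuclideanSpace ℝ (Fin d)) (hp : p ∈ P)
    (h : ∃ x ∈ convexHull ℝ (Q : Set (EuclideanSpace ℝ (Fin d))),
      ∀ p' ∈ P, p' ≠ p → dist x p < dist x p') :
    ∀ p' ∈ P, p' ≠ p → ¬ SpatiallyDominates Q p' p := by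
  rintro p' hp' hne ⟨hle, -⟩
  obtain ⟨x, hx, hlt⟩ := h
  have hQsub : (Q : Set (EuclideanSpace ℝ (Fin d))) ⊆
      {x : EuclideanSpace ℝ (Fin d) | dist x p' ≤ dist x p} := by
    intro q hq
    simp only [Set.mem_setOf_eq, dist_comm _ p', dist_comm _ p]
    exact hle q hq
  have := convexHull_min hQsub (convex_bisector_le p' p) hx
  exact absurd (hlt p' hp' hne) (not_lt.mpr this)
end

section
/- If the perpendicular bisector of distinct points p1 and p2 does not intersect the convex hull of Q, then either p1 spatially dominates p2 or p2 spatially dominates p1. -/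
theorem stmt16 (d : ℕ) (Q : Finset (EuclideanSpace ℝ (Fin d))) (hQ : Q.Nonempty)
    (p1 p2 : EuclideanSpace ℝ (Fin d)) (hne : p1 ≠ p2)
    (h : {x : EuclideanSpace ℝ (Fin d) | dist x p1 = dist x p2} ∩
        convexHull ℝ (Q : Set (EuclideanSpace ℝ (Fin d))) = ∅) :
    SpatiallyDominates Q p1 p2 ∨ SpatiallyDominates Q p2 p1 := by
  set f : EuclideanSpace ℝ (Fin d) → ℝ := fun x => dist x p1 - dist x p2 with hf
  have hcont : Continuous f := (continuous_id.dist continuous_const).sub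
    (continuous_id.dist continuous_const)
  set H := convexHull ℝ (Q : Set (EuclideanSpace ℝ (Fin d)))
  have hHpre : IsPreconnected H := (convex_convexHull ℝ _).isPreconnected
  have himg : IsPreconnected (f '' H) := hHpre.image f hcont.continuousOn
  have hne0 : ∀ x ∈ H, f x ≠ 0 := by
    intro x hx hx0
    have : x ∈ {x : EuclideanSpace ℝ (Fin d) | dist x p1 = dist x p2} ∩ H := by
      constructor
      · simpa [hf, sub_eq_zero] using hx0
      · exact hx
    simp [h] at this
  have hsub : f '' H ⊆ Set.Iio 0 ∪ Set.Ioi 0 := by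
    rintro y ⟨x, hx, rfl⟩
    rcases lt_or_gt_of_ne (hne0 x hx) with h1 | h1
    · exact Or.inl h1
    · exact Or.inr h1
  have := himg.subset_or_subset isOpen_Iio isOpen_Ioi
    (by simp [Set.disjoint_left]; intro a h1; linarith) hsub
  have hQH : ∀ q ∈ Q, q ∈ H := fun q hq => subset_convexHull ℝ _ hq
  rcases this with hcase | hcase
  · left
    constructor
    · intro q hq
      have := hcase ⟨q, hQH q hq, rfl⟩
      simp only [Set.mem_Iio, hf, sub_neg] at this
      rw [dist_comm q p1, dist_comm q p2] at this
      exact this.le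
    · obtain ⟨q, hq⟩ := hQ
      refine ⟨q, hq, ?_⟩
      have := hcase ⟨q, hQH q hq, rfl⟩
      simp only [Set.mem_Iio, hf, sub_neg] at this
      rw [dist_comm q p1, dist_comm q p2] at this
      exact this
  · right
    constructor
    · intro q hq
      have := hcase ⟨q, hQH q hq, rfl⟩
      simp only [Set.mem_Ioi, hf, sub_pos] at this
      rw [dist_comm q p1, dist_comm q p2] at this
      exact this.le
    · obtain ⟨q, hq⟩ := hQ
      refine ⟨q, hq, ?_⟩
      have := hcase ⟨q, hQH q hq, rfl⟩
      simp only [Set.mem_Ioi, hf, sub_pos] at this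
      rw [dist_comm q p1, dist_comm q p2] at this
      exact this
end

section
/- If p1 spatially dominates p2 with respect to the vertex set of conv(Q), and Q is contained in conv(V) where V is that vertex set, then p1 spatially dominates p2 with respect to Q — in particular, a point that is a spatial skyline with respect to Q is a spatial skyline with respect to V whenever weak dominance transfers: d(p1,q) ≤ d(p2,q) for all q ∈ V implies d(p1,q) ≤ d(p2,q) for all q ∈ Q. -/
lemma convex_dist_le {d : ℕ} (p1 p2 : EuclideanSpace ℝ (Fin d)) :
    Convex ℝ {x : EuclideanSpace ℝ (Fin d) | dist p1 x ≤ dist p2 x} := by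
  have key : {x : EuclideanSpace ℝ (Fin d) | dist p1 x ≤ dist p2 x}
      = {x | (inner ℝ ((2:ℝ) • (p2 - p1)) x : ℝ) ≤ ‖p2‖ ^ 2 - ‖p1‖ ^ 2} := by
    ext x
    simp only [Set.mem_setOf_eq, dist_eq_norm]
    rw [← Real.sqrt_sq (norm_nonneg (p1 - x)), ← Real.sqrt_sq (norm_nonneg (p2 - x)),
      Real.sqrt_le_sqrt_iff (by positivity)]
    have h1 := @norm_sub_sq_real (EuclideanSpace ℝ (Fin d)) _ _ p1 x
    have h2 := @norm_sub_sq_real (EuclideanSpace ℝ (Fin d)) _ _ p2 x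
    rw [h1, h2, real_inner_smul_left, inner_sub_left]
    push_cast
    ring_nf
    constructor <;> intro <;> linarith
  rw [key]
  exact fun x hx y hy a b ha hb hab => by
    simp only [Set.mem_setOf_eq] at *
    rw [inner_add_right, inner_smul_right, inner_smul_right]
    calc _ ≤ a * (‖p2‖ ^ 2 - ‖p1‖ ^ 2) + b * (‖p2‖ ^ 2 - ‖p1‖ ^ 2) := add_le_add (by nlinarith [hx]) (by nlinarith [hy])
      _ = ‖p2‖ ^ 2 - ‖p1‖ ^ 2 := by
          rw [← add_mul, hab, one_mul]


theorem stmt17 (d : ℕ) (Q V : Set (EuclideanSpace ℝ (Fin d)))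
    (hQfin : Q.Finite) (hVQ : V ⊆ Q) (hQV : Q ⊆ convexHull ℝ V)
    (p1 p2 : EuclideanSpace ℝ (Fin d))
    (h : SpatiallyDominatesSet V p1 p2) :
    SpatiallyDominatesSet Q p1 p2 := by
  obtain ⟨hall, q, hqV, hqlt⟩ := h
  refine ⟨fun x hx => ?_, ⟨q, hVQ hqV, hqlt⟩⟩
  have : convexHull ℝ V ⊆ {x | dist p1 x ≤ dist p2 x} :=
    convexHull_min (fun v hv => hall v hv) (convex_dist_le p1 p2)
  exact this (hQV hx)
end
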